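/- Let m > 2 be an integer, k a positive multiple of m, and P a finite set of points in ℝ² with pairwise distinct x-coordinates and pairwise distinct y-coordinates. Let ξ₀ < ξ₁ < … < ξ_m and η₀ < η₁ < … < η_m be reals, define the vertical strips X_i = {p : ξ_i ≤ p_x < ξ_{i+1}}, horizontal strips Y_j = {p : η_j ≤ p_y < η_{j+1}}, and cells C_{ij} = X_i ∩ Y_j. Let OPT ⊆ P with |OPT| = k minimize w over all k-element subsets of P, suppose OPT ⊆ ∪_{i,j} C_{ij} and |OPT ∩ X_i| = |OPT ∩ Y_j| = k/m for all 0 ≤ i, j < m, and set k_{ij} = |OPT ∩ C_{ij}| and ∇_{ij} = ((2i+1−m)k/m, (2j+1−m)k/m). For each i,j let A_{ij} ⊆ P ∩ C_{ij} with |A_{ij}| = k_{ij} minimize Σ_{p∈A_{ij}} ⟨p, ∇_{ij}⟩ over all k_{ij}-element subsets of P ∩ C_{ij}, and put A = ∪_{i,j} A_{ij}, A_{i·} = ∪_j A_{ij}, A_{·j} = ∪_i A_{ij}. Then (1/2)·Σ_{i,j} [ w_x(A_{ij}, A∖A_{i·}) + w_y(A_{ij}, A∖A_{·j}) ] ≤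 w(OPT); i.e., the total cross-strip distance of the greedily chosen set A is at most the weight of the optimal set. -/

import Mathlib

open Finset
open scoped Classical


lemma mono_of_lt (m : ℕ) (ξ : ℕ → ℝ) (hξ : ∀ i < m, ξ i < ξ (i + 1)) :
    ∀ a b : ℕ, a ≤ b → b ≤ m → ξ a ≤ ξ b := by
  intro a b hab hbm
  induction b with
  | zero => exact le_of_eq (by rw [Nat.le_zero.mp hab])
  | succ n ih =>
    rcases Nat.lt_or_ge a (n + 1) with h | h
    · calc ξ a ≤ ξ n := ih (by omega) (by omega)
      _ ≤ ξ (n + 1) := le_of_lt (hξ n (by omega))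
    · have : a = n + 1 := by omega
      simp [this]

lemma exists_strip (m : ℕ) (hm : 0 < m) (ξ : ℕ → ℝ) (hξ : ∀ i < m, ξ i < ξ (i + 1))
    (x : ℝ) (h0 : ξ 0 ≤ x) (h1 : x < ξ m) : ∃ i < m, ξ i ≤ x ∧ x < ξ (i + 1) := by
  set i := Nat.findGreatest (fun t => ξ t ≤ x) (m - 1) with hi
  have hspec : ξ i ≤ x := by
    have := Nat.findGreatest_spec (P := fun t => ξ t ≤ x) (m := 0) (Nat.zero_le (m - 1)) h0
    simpa [hi] using this
  have hle : i ≤ m - 1 := Nat.findGreatest_le _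
  have him : i < m := by omega
  refine ⟨i, him, hspec, ?_⟩
  by_contra hcon
  push_neg at hcon
  rcases Nat.lt_or_ge (i + 1) m with h | h
  · have h2 : i + 1 ≤ m - 1 := by omega
    exact Nat.findGreatest_is_greatest (Nat.lt_succ_self i) h2 hcon
  · have h2 : i + 1 = m := by omega
    rw [h2] at hcon
    linarith

lemma strip_unique (m : ℕ) (ξ : ℕ → ℝ) (hξ : ∀ i < m, ξ i < ξ (i + 1))
    {i i' : ℕ} (hi : i < m) (hi' : i' < m) {x : ℝ}
    (h1 : ξ i ≤ x ∧ x < ξ (i + 1)) (h2 : ξ i' ≤ x ∧ x < ξ (i' + 1)) : i = i' := by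
  by_contra hne
  rcases Nat.lt_or_ge i i' with h | h
  · have : ξ (i + 1) ≤ ξ i' := mono_of_lt m ξ hξ _ _ (by omega) (by omega)
    linarith [h1.2, h2.1]
  · have : ξ (i' + 1) ≤ ξ i := mono_of_lt m ξ hξ _ _ (by omega) (by omega)
    linarith [h1.1, h2.2]


lemma sum_biUnion_eq {X : Type*} [DecidableEq X] (m : ℕ) (B : ℕ → Finset X)
    (hd : ∀ i1 < m, ∀ i2 < m, i1 ≠ i2 → Disjoint (B i1) (B i2)) (f : X → ℝ) :
    ∑ p ∈ (range m).biUnion B, f p = ∑ i ∈ range m, ∑ p ∈ B i, f p := by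
  refine Finset.sum_biUnion ?_
  intro a ha b hb hab
  exact hd a (mem_range.mp (Finset.mem_coe.mp ha)) b (mem_range.mp (Finset.mem_coe.mp hb)) hab

lemma eps_sum_left (m t : ℕ) (ht : t < m) :
    ∑ i ∈ range m, (if i < t then (1:ℝ) else if t < i then -1 else 0)
      = 2 * t + 1 - m := by
  have h1 : ∀ i ∈ range m, (if i < t then (1:ℝ) else if t < i then -1 else 0)
      = (if i < t then (1:ℝ) else 0) + (if t < i then (-1:ℝ) else 0) := by
    intro i _
    rcases lt_trichotomy i t with h | h | h
    · simp [h, lt_asymm h]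
    · simp [h]
    · simp [h, lt_asymm h, Nat.lt_irrefl, (by omega : ¬ i < t)]
  rw [Finset.sum_congr rfl h1, Finset.sum_add_distrib,
    ← Finset.sum_filter, ← Finset.sum_filter]
  have h2 : ((range m).filter (fun i => i < t)) = range t := by
    ext i; simp [mem_range]; omega
  have h3 : ((range m).filter (fun i => t < i)) = Ico (t + 1) m := by
    ext i; simp [mem_range, mem_Ico]; omega
  rw [h2, h3, Finset.sum_const, Finset.sum_const, Nat.card_Ico, card_range]
  simp only [nsmul_eq_mul, mul_one, mul_neg_one]
  rw [Nat.cast_sub (by omega : t + 1 ≤ m)]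
  push_cast
  ring

lemma eps_sum_right (m t : ℕ) (ht : t < m) :
    ∑ i ∈ range m, (if t < i then (1:ℝ) else if i < t then -1 else 0)
      = -(2 * t + 1 - m) := by
  have h1 : ∀ i ∈ range m, (if t < i then (1:ℝ) else if i < t then -1 else 0)
      = -(if i < t then (1:ℝ) else if t < i then -1 else 0) := by
    intro i _
    rcases lt_trichotomy i t with h | h | h
    · simp [h, lt_asymm h]
    · simp [h]
    · simp [h, lt_asymm h, (by omega : ¬ i < t)]
  rw [Finset.sum_congr rfl h1, Finset.sum_neg_distrib, eps_sum_left m t ht]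

lemma cross_identity (m K : ℕ) (ξ : ℕ → ℝ)
    (hξ : ∀ i < m, ξ i < ξ (i + 1))
    (B : ℕ → ℕ → Finset (Fin 2 → ℝ)) (c : (Fin 2 → ℝ) → ℝ)
    (hsub : ∀ i < m, ∀ j < m, ∀ p ∈ B i j, ξ i ≤ c p ∧ c p < ξ (i + 1))
    (hdisj : ∀ i1 < m, ∀ j1 < m, ∀ i2 < m, ∀ j2 < m,
      (i1 ≠ i2 ∨ j1 ≠ j2) → Disjoint (B i1 j1) (B i2 j2))
    (hrow : ∀ i < m, ∑ j ∈ range m, (B i j).card = K) :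
    ∑ i ∈ range m, ∑ j ∈ range m, ∑ p ∈ B i j,
        ∑ q ∈ (((range m).biUnion fun i' => (range m).biUnion fun j' => B i' j') \
            ((range m).biUnion fun j' => B i j')), |c p - c q|
      = 2 * ∑ i ∈ range m, ∑ j ∈ range m, ∑ p ∈ B i j,
          ((2 * (i : ℝ) + 1 - m) * K) * c p := by
  set ε : ℕ → ℕ → ℝ := fun i i' => if i < i' then 1 else if i' < i then -1 else 0 with hε
  set S : ℕ → ℝ := fun i' => ∑ j' ∈ range m, ∑ q ∈ B i' j', c q with hS
  set U : Finset (Fin 2 → ℝ) :=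
    (range m).biUnion fun i' => (range m).biUnion fun j' => B i' j' with hU
  -- rows are pairwise disjoint
  have hrowdisj : ∀ i1 < m, ∀ i2 < m, i1 ≠ i2 →
      Disjoint ((range m).biUnion fun j' => B i1 j') ((range m).biUnion fun j' => B i2 j') := by
    intro i1 h1 i2 h2 hne
    rw [Finset.disjoint_biUnion_left]
    intro j1 hj1
    rw [Finset.disjoint_biUnion_right]
    intro j2 hj2
    exact hdisj i1 h1 j1 (mem_range.mp hj1) i2 h2 j2 (mem_range.mp hj2) (Or.inl hne)
  -- Step 1: inner sum
  have step1 : ∀ i < m, ∀ j < m, ∀ p ∈ B i j,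
      ∑ q ∈ (U \ ((range m).biUnion fun j' => B i j')), |c p - c q|
        = ∑ i' ∈ range m, ε i i' * (S i' - K * c p) := by
    intro i hi j hj p hp
    have hRU : ((range m).biUnion fun j' => B i j') ⊆ U := by
      intro q hq
      rcases Finset.mem_biUnion.mp hq with ⟨j', hj', hq'⟩
      exact Finset.mem_biUnion.mpr ⟨i, mem_range.mpr hi, Finset.mem_biUnion.mpr ⟨j', hj', hq'⟩⟩
    rw [Finset.sum_sdiff_eq_sub hRU]
    have hUsum : ∑ q ∈ U, |c p - c q|
        = ∑ i' ∈ range m, ∑ j' ∈ range m, ∑ q ∈ B i' j', |c p - c q| := by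
      rw [hU, sum_biUnion_eq m _ hrowdisj]
      refine Finset.sum_congr rfl fun i' hi' => ?_
      exact sum_biUnion_eq m _ (fun j1 h1 j2 h2 hne =>
        hdisj i' (mem_range.mp hi') j1 h1 i' (mem_range.mp hi') j2 h2 (Or.inr hne)) _
    have hRsum : ∑ q ∈ ((range m).biUnion fun j' => B i j'), |c p - c q|
        = ∑ j' ∈ range m, ∑ q ∈ B i j', |c p - c q| :=
      sum_biUnion_eq m _ (fun j1 h1 j2 h2 hne => hdisj i hi j1 h1 i hi j2 h2 (Or.inr hne)) _
    rw [hUsum, hRsum]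
    set G : ℕ → ℝ := fun i' => ∑ j' ∈ range m, ∑ q ∈ B i' j', |c p - c q| with hG
    have hcancel : ∑ i' ∈ range m, (if i' = i then 0 else G i')
        = (∑ i' ∈ range m, G i') - G i := by
      have h0 : ∀ i' ∈ range m, (if i' = i then 0 else G i')
          = G i' - (if i' = i then G i' else 0) := by
        intro i' _; split <;> simp
      rw [Finset.sum_congr rfl h0, Finset.sum_sub_distrib, Finset.sum_ite_eq' (range m) i G]
      simp [mem_range.mpr hi]
    rw [← hcancel]
    refine Finset.sum_congr rfl fun i' hi' => ?_
    by_cases hii : i' = i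
    · simp [hii, hε]
    · have hi'm : i' < m := mem_range.mp hi'
      have habs : ∀ j' < m, ∀ q ∈ B i' j', |c p - c q| = ε i i' * (c q - c p) := by
        intro j' hj' q hq
        have hpq := hsub i hi j hj p hp
        have hq2 := hsub i' hi'm j' hj' q hq
        rcases Nat.lt_or_ge i i' with h | h
        · have : ξ (i + 1) ≤ ξ i' := mono_of_lt m ξ hξ _ _ (by omega) (by omega)
          have hlt : c p < c q := by linarith [hpq.2, hq2.1]
          rw [abs_of_neg (by linarith : c p - c q < 0)]
          have hε1 : ε i i' = 1 := by simp [hε, h]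
          rw [hε1]; ring
        · have hlt' : i' < i := by omega
          have : ξ (i' + 1) ≤ ξ i := mono_of_lt m ξ hξ _ _ (by omega) (by omega)
          have hlt : c q < c p := by linarith [hq2.2, hpq.1]
          rw [abs_of_pos (by linarith : 0 < c p - c q)]
          have hε1 : ε i i' = -1 := by simp [hε, hlt', lt_asymm hlt']
          rw [hε1]; ring
      have hGi' : G i' = ε i i' * (S i' - K * c p) := by
        rw [hG]
        simp only
        have : ∀ j' ∈ range m, ∑ q ∈ B i' j', |c p - c q|
            = ε i i' * (∑ q ∈ B i' j', c q - (B i' j').card * c p) := by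
          intro j' hj'
          rw [Finset.sum_congr rfl (habs j' (mem_range.mp hj')), ← Finset.mul_sum]
          congr 1
          rw [Finset.sum_sub_distrib, Finset.sum_const, nsmul_eq_mul]
        rw [Finset.sum_congr rfl this, ← Finset.mul_sum]
        congr 1
        rw [Finset.sum_sub_distrib, ← Finset.sum_mul, hS]
        simp only
        rw [← Nat.cast_sum]
        rw [hrow i' hi'm]
      rw [if_neg hii, hGi']
  -- rewrite LHS using step1
  have lhs_eq : ∑ i ∈ range m, ∑ j ∈ range m, ∑ p ∈ B i j,
      ∑ q ∈ (U \ ((range m).biUnion fun j' => B i j')), |c p - c q|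
      = ∑ i ∈ range m, ∑ j ∈ range m, ∑ p ∈ B i j,
          ∑ i' ∈ range m, ε i i' * (S i' - K * c p) := by
    refine Finset.sum_congr rfl fun i hi => Finset.sum_congr rfl fun j hj =>
      Finset.sum_congr rfl fun p hp => ?_
    exact step1 i (mem_range.mp hi) j (mem_range.mp hj) p hp
  rw [lhs_eq]
  -- Step 2: algebra
  set T : ℕ → ℕ → ℝ := fun i j => ∑ p ∈ B i j, c p with hT
  have step2 : ∀ i < m, ∑ j ∈ range m, ∑ p ∈ B i j, ∑ i' ∈ range m, ε i i' * (S i' - K * c p)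
      = ∑ i' ∈ range m, ε i i' * (K * S i' - K * S i) := by
    intro i hi
    have h1 : ∀ j ∈ range m, ∑ p ∈ B i j, ∑ i' ∈ range m, ε i i' * (S i' - K * c p)
        = ∑ i' ∈ range m, ε i i' * ((B i j).card * S i' - K * T i j) := by
      intro j hj
      rw [Finset.sum_comm]
      refine Finset.sum_congr rfl fun i' hi' => ?_
      rw [← Finset.mul_sum]
      congr 1
      rw [Finset.sum_sub_distrib, Finset.sum_const, nsmul_eq_mul, ← Finset.mul_sum, hT]
    rw [Finset.sum_congr rfl h1, Finset.sum_comm]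
    refine Finset.sum_congr rfl fun i' hi' => ?_
    rw [← Finset.mul_sum]
    congr 1
    rw [Finset.sum_sub_distrib, ← Finset.sum_mul, ← Finset.mul_sum, ← Nat.cast_sum,
      hrow i hi, hS]
  rw [Finset.sum_congr rfl (fun i hi => step2 i (mem_range.mp hi))]
  -- final algebra
  have expand : ∀ i ∈ range m, ∑ i' ∈ range m, ε i i' * (K * S i' - K * S i)
      = (∑ i' ∈ range m, ε i i' * (K * S i')) - (∑ i' ∈ range m, ε i i') * (K * S i) := by
    intro i hi
    rw [Finset.sum_mul, ← Finset.sum_sub_distrib]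
    exact Finset.sum_congr rfl fun i' _ => by ring
  rw [Finset.sum_congr rfl expand, Finset.sum_sub_distrib]
  have hfirst : ∑ i ∈ range m, ∑ i' ∈ range m, ε i i' * (K * S i')
      = ∑ i' ∈ range m, (2 * (i' : ℝ) + 1 - m) * (K * S i') := by
    rw [Finset.sum_comm]
    refine Finset.sum_congr rfl fun i' hi' => ?_
    rw [← Finset.sum_mul]
    congr 1
    exact eps_sum_left m i' (mem_range.mp hi')
  have hsecond : ∑ i ∈ range m, (∑ i' ∈ range m, ε i i') * (K * S i)
      = ∑ i ∈ range m, (-(2 * (i : ℝ) + 1 - m) - 0) * (K * S i) := by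
    refine Finset.sum_congr rfl fun i hi => ?_
    congr 1
    rw [eps_sum_right m i (mem_range.mp hi)]
    ring
  rw [hfirst, hsecond]
  have hrhs : ∀ i ∈ range m, ∑ j ∈ range m, ∑ p ∈ B i j, ((2 * (i : ℝ) + 1 - m) * K) * c p
      = (2 * (i : ℝ) + 1 - m) * (K * S i) := by
    intro i hi
    rw [hS]
    simp only
    rw [Finset.mul_sum, Finset.mul_sum]
    refine Finset.sum_congr rfl fun j hj => ?_
    rw [Finset.mul_sum, Finset.mul_sum]
    refine Finset.sum_congr rfl fun p hp => by ring
  rw [Finset.sum_congr rfl hrhs, Finset.mul_sum, ← Finset.sum_sub_distrib]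
  exact Finset.sum_congr rfl fun i hi => by ring

lemma filter_decomp (m : ℕ) (hm : 0 < m) (η : ℕ → ℝ) (hη : ∀ j < m, η j < η (j + 1))
    (S : Finset (Fin 2 → ℝ)) (d : Fin 2)
    (hcov : ∀ p ∈ S, η 0 ≤ p d ∧ p d < η m) :
    S = (range m).biUnion (fun j => S.filter fun p => η j ≤ p d ∧ p d < η (j + 1)) := by
  ext p
  constructor
  · intro hp
    obtain ⟨j, hj, hle, hlt⟩ := exists_strip m hm η hη (p d) (hcov p hp).1 (hcov p hp).2
    exact mem_biUnion.mpr ⟨j, mem_range.mpr hj, mem_filter.mpr ⟨hp, hle, hlt⟩⟩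
  · intro hp
    obtain ⟨j, hj, hp'⟩ := mem_biUnion.mp hp
    exact (mem_filter.mp hp').1

lemma filter_card_decomp (m : ℕ) (hm : 0 < m) (η : ℕ → ℝ) (hη : ∀ j < m, η j < η (j + 1))
    (S : Finset (Fin 2 → ℝ)) (d : Fin 2)
    (hcov : ∀ p ∈ S, η 0 ≤ p d ∧ p d < η m) :
    S.card = ∑ j ∈ range m, (S.filter fun p => η j ≤ p d ∧ p d < η (j + 1)).card := by
  conv_lhs => rw [filter_decomp m hm η hη S d hcov]
  refine Finset.card_biUnion ?_
  intro j1 h1 j2 h2 hne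
  rw [Function.onFun, Finset.disjoint_left]
  intro p hp1 hp2
  exact hne (strip_unique m η hη (mem_range.mp h1) (mem_range.mp h2)
    (mem_filter.mp hp1).2 (mem_filter.mp hp2).2)


open Finset
open scoped Classical

/-- The L1 (Manhattan) distance between two points of the plane. -/
noncomputable def dist1 (p q : Fin 2 → ℝ) : ℝ := ∑ i, |p i - q i|

/-- The sum of L1 distances over all unordered pairs of distinct points of `S`. -/
noncomputable def w (S : Finset (Fin 2 → ℝ)) : ℝ := (∑ p ∈ S, ∑ q ∈ S, dist1 p q) / 2

/-- `w_x(S,T) = Σ_{p∈S, q∈T} |p_x − q_x|` (sum over ordered pairs). -/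
noncomputable def wxp (S T : Finset (Fin 2 → ℝ)) : ℝ := ∑ p ∈ S, ∑ q ∈ T, |p 0 - q 0|

/-- `w_y(S,T) = Σ_{p∈S, q∈T} |p_y − q_y|` (sum over ordered pairs). -/
noncomputable def wyp (S T : Finset (Fin 2 → ℝ)) : ℝ := ∑ p ∈ S, ∑ q ∈ T, |p 1 - q 1|

set_option maxHeartbeats 2000000 in
/-- The cross-strip distance bound for the PTAS selection rule: the total cross-strip
distance of the greedily chosen set `A = ∪_{i,j} A_{ij}` is at most `w(OPT)`. -/
theorem ptas_cross_strip_bound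
    (m k : ℕ) (hm : 2 < m) (hk : 0 < k) (hmk : m ∣ k)
    (P : Finset (Fin 2 → ℝ))
    (hPx : ∀ p ∈ P, ∀ q ∈ P, p ≠ q → p 0 ≠ q 0)
    (hPy : ∀ p ∈ P, ∀ q ∈ P, p ≠ q → p 1 ≠ q 1)
    (ξ η : ℕ → ℝ)
    (hξ : ∀ i < m, ξ i < ξ (i + 1))
    (hη : ∀ j < m, η j < η (j + 1))
    (OPT : Finset (Fin 2 → ℝ)) (hOP : OPT ⊆ P) (hOcard : OPT.card = k)
    (hOopt : ∀ T ⊆ P, T.card = k → w OPT ≤ w T)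
    -- OPT is covered by the cells `C_{ij} = X_i ∩ Y_j`
    (hOcover : ∀ p ∈ OPT, ξ 0 ≤ p 0 ∧ p 0 < ξ m ∧ η 0 ≤ p 1 ∧ p 1 < η m)
    -- each vertical strip `X_i` and each horizontal strip `Y_j` contains exactly
    -- `k/m` points of OPT
    (hOX : ∀ i < m,
      (OPT.filter fun p => ξ i ≤ p 0 ∧ p 0 < ξ (i + 1)).card = k / m)
    (hOY : ∀ j < m,
      (OPT.filter fun p => η j ≤ p 1 ∧ p 1 < η (j + 1)).card = k / m)
    (A : ℕ → ℕ → Finset (Fin 2 → ℝ))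
    -- `A_{ij} ⊆ P ∩ C_{ij}` with `|A_{ij}| = k_{ij} = |OPT ∩ C_{ij}|` minimizes
    -- `Σ_{p ∈ A_{ij}} ⟨p, ∇_{ij}⟩` where `∇_{ij} = ((2i+1−m)k/m, (2j+1−m)k/m)`
    (hAsub : ∀ i < m, ∀ j < m,
      A i j ⊆ P.filter fun p =>
        (ξ i ≤ p 0 ∧ p 0 < ξ (i + 1)) ∧ (η j ≤ p 1 ∧ p 1 < η (j + 1)))
    (hAcard : ∀ i < m, ∀ j < m,
      (A i j).card = (OPT.filter fun p =>
        (ξ i ≤ p 0 ∧ p 0 < ξ (i + 1)) ∧ (η j ≤ p 1 ∧ p 1 < η (j + 1))).card)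
    (hAmin : ∀ i < m, ∀ j < m,
      ∀ B ⊆ (P.filter fun p =>
        (ξ i ≤ p 0 ∧ p 0 < ξ (i + 1)) ∧ (η j ≤ p 1 ∧ p 1 < η (j + 1))),
        B.card = (A i j).card →
        ∑ p ∈ A i j,
          (((2 * (i : ℝ) + 1 - m) * k / m) * p 0 +
           ((2 * (j : ℝ) + 1 - m) * k / m) * p 1) ≤
        ∑ p ∈ B,
          (((2 * (i : ℝ) + 1 - m) * k / m) * p 0 +
           ((2 * (j : ℝ) + 1 - m) * k / m) * p 1)) :
    (1 / 2) * ∑ i ∈ Finset.range m, ∑ j ∈ Finset.range m,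
      (wxp (A i j)
        (((Finset.range m).biUnion fun i' =>
            (Finset.range m).biUnion fun j' => A i' j') \
          ((Finset.range m).biUnion fun j' => A i j')) +
       wyp (A i j)
        (((Finset.range m).biUnion fun i' =>
            (Finset.range m).biUnion fun j' => A i' j') \
          ((Finset.range m).biUnion fun i' => A i' j))) ≤ w OPT := by
  
  have hmpos : 0 < m := by omega
  have hm0 : (m : ℝ) ≠ 0 := Nat.cast_ne_zero.mpr (by omega)
  have hkmK : m * (k / m) = k := Nat.mul_div_cancel' hmk
  have hKdiv : ((k / m : ℕ) : ℝ) = (k : ℝ) / m := by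
    have h : ((m : ℝ) * ((k / m : ℕ) : ℝ)) = (k : ℝ) := by
      exact_mod_cast congrArg (fun n : ℕ => (n : ℝ)) hkmK
    rw [eq_div_iff hm0]
    linarith [h]
  have hterm : ∀ (i j : ℕ) (p : Fin 2 → ℝ),
      ((2 * (i : ℝ) + 1 - (m : ℝ)) * ((k / m : ℕ) : ℝ)) * p 0 + ((2 * (j : ℝ) + 1 - (m : ℝ)) * ((k / m : ℕ) : ℝ)) * p 1
        = ((2 * (i : ℝ) + 1 - m) * k / m) * p 0 + ((2 * (j : ℝ) + 1 - m) * k / m) * p 1 := by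
    intro i j p
    rw [hKdiv]
    ring
  -- A-family basic facts
  have hAx : ∀ i < m, ∀ j < m, ∀ p ∈ A i j, ξ i ≤ p 0 ∧ p 0 < ξ (i + 1) := by
    intro i hi j hj p hp
    exact ((Finset.mem_filter.mp (hAsub i hi j hj hp)).2).1
  have hAy : ∀ i < m, ∀ j < m, ∀ p ∈ A i j, η j ≤ p 1 ∧ p 1 < η (j + 1) := by
    intro i hi j hj p hp
    exact ((Finset.mem_filter.mp (hAsub i hi j hj hp)).2).2
  have hAdisj : ∀ i1 < m, ∀ j1 < m, ∀ i2 < m, ∀ j2 < m,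
      (i1 ≠ i2 ∨ j1 ≠ j2) → Disjoint (A i1 j1) (A i2 j2) := by
    intro i1 h1 j1 hj1 i2 h2 j2 hj2 hne
    rw [Finset.disjoint_left]
    intro p hp1 hp2
    have m1 := (Finset.mem_filter.mp (hAsub i1 h1 j1 hj1 hp1)).2
    have m2 := (Finset.mem_filter.mp (hAsub i2 h2 j2 hj2 hp2)).2
    rcases hne with h | h
    · exact h (strip_unique m ξ hξ h1 h2 m1.1 m2.1)
    · exact h (strip_unique m η hη hj1 hj2 m1.2 m2.2)
  -- O-family basic facts
  have hOx : ∀ i < m, ∀ j < m, ∀ p ∈ (OPT.filter fun p => (ξ i ≤ p 0 ∧ p 0 < ξ (i + 1)) ∧ (η j ≤ p 1 ∧ p 1 < η (j + 1))), ξ i ≤ p 0 ∧ p 0 < ξ (i + 1) := by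
    intro i hi j hj p hp
    exact (Finset.mem_filter.mp hp).2.1
  have hOy : ∀ i < m, ∀ j < m, ∀ p ∈ (OPT.filter fun p => (ξ i ≤ p 0 ∧ p 0 < ξ (i + 1)) ∧ (η j ≤ p 1 ∧ p 1 < η (j + 1))), η j ≤ p 1 ∧ p 1 < η (j + 1) := by
    intro i hi j hj p hp
    exact (Finset.mem_filter.mp hp).2.2
  have hOdisj : ∀ i1 < m, ∀ j1 < m, ∀ i2 < m, ∀ j2 < m,
      (i1 ≠ i2 ∨ j1 ≠ j2) → Disjoint (OPT.filter fun p => (ξ i1 ≤ p 0 ∧ p 0 < ξ (i1 + 1)) ∧ (η j1 ≤ p 1 ∧ p 1 < η (j1 + 1))) (OPT.filter fun p => (ξ i2 ≤ p 0 ∧ p 0 < ξ (i2 + 1)) ∧ (η j2 ≤ p 1 ∧ p 1 < η (j2 + 1))) := by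
    intro i1 h1 j1 hj1 i2 h2 j2 hj2 hne
    rw [Finset.disjoint_left]
    intro p hp1 hp2
    have m1 := (Finset.mem_filter.mp hp1).2
    have m2 := (Finset.mem_filter.mp hp2).2
    rcases hne with h | h
    · exact h (strip_unique m ξ hξ h1 h2 m1.1 m2.1)
    · exact h (strip_unique m η hη hj1 hj2 m1.2 m2.2)
  -- row and column counts
  have hOrow : ∀ i < m, ∑ j ∈ range m, ((OPT.filter fun p => (ξ i ≤ p 0 ∧ p 0 < ξ (i + 1)) ∧ (η j ≤ p 1 ∧ p 1 < η (j + 1)))).card = k / m := by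
    intro i hi
    have hcov : ∀ p ∈ (OPT.filter fun p => ξ i ≤ p 0 ∧ p 0 < ξ (i + 1)),
        η 0 ≤ p 1 ∧ p 1 < η m := by
      intro p hp
      have := hOcover p (Finset.mem_filter.mp hp).1
      exact ⟨this.2.2.1, this.2.2.2⟩
    have hdec := filter_card_decomp m hmpos η hη
      (OPT.filter fun p => ξ i ≤ p 0 ∧ p 0 < ξ (i + 1)) 1 hcov
    rw [hOX i hi] at hdec
    have hstep : ∀ j ∈ range m,
        ((OPT.filter fun p => (ξ i ≤ p 0 ∧ p 0 < ξ (i + 1)) ∧ (η j ≤ p 1 ∧ p 1 < η (j + 1)))).card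
          = (((OPT.filter fun p => ξ i ≤ p 0 ∧ p 0 < ξ (i + 1)).filter
              fun p => η j ≤ p 1 ∧ p 1 < η (j + 1))).card := by
      intro j hj
      congr 1
      ext p
      simp only [Finset.mem_filter]
      tauto
    exact (Finset.sum_congr rfl hstep).trans hdec.symm
  have hOcol : ∀ j < m, ∑ i ∈ range m, ((OPT.filter fun p => (ξ i ≤ p 0 ∧ p 0 < ξ (i + 1)) ∧ (η j ≤ p 1 ∧ p 1 < η (j + 1)))).card = k / m := by
    intro j hj
    have hcov : ∀ p ∈ (OPT.filter fun p => η j ≤ p 1 ∧ p 1 < η (j + 1)),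
        ξ 0 ≤ p 0 ∧ p 0 < ξ m := by
      intro p hp
      have := hOcover p (Finset.mem_filter.mp hp).1
      exact ⟨this.1, this.2.1⟩
    have hdec := filter_card_decomp m hmpos ξ hξ
      (OPT.filter fun p => η j ≤ p 1 ∧ p 1 < η (j + 1)) 0 hcov
    rw [hOY j hj] at hdec
    have hstep : ∀ i ∈ range m,
        ((OPT.filter fun p => (ξ i ≤ p 0 ∧ p 0 < ξ (i + 1)) ∧ (η j ≤ p 1 ∧ p 1 < η (j + 1)))).card
          = (((OPT.filter fun p => η j ≤ p 1 ∧ p 1 < η (j + 1)).filter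
              fun p => ξ i ≤ p 0 ∧ p 0 < ξ (i + 1))).card := by
      intro i hi
      congr 1
      ext p
      simp only [Finset.mem_filter]
      tauto
    exact (Finset.sum_congr rfl hstep).trans hdec.symm
  have hArow : ∀ i < m, ∑ j ∈ range m, (A i j).card = k / m := by
    intro i hi
    rw [Finset.sum_congr rfl (fun j hj => hAcard i hi j (Finset.mem_range.mp hj))]
    exact hOrow i hi
  have hAcol : ∀ a < m, ∑ b ∈ range m, (A b a).card = k / m := by
    intro a ha
    rw [Finset.sum_congr rfl (fun b hb => hAcard b (Finset.mem_range.mp hb) a ha)]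
    exact hOcol a ha
  have hOcolS : ∀ a < m, ∑ b ∈ range m, ((OPT.filter fun p => (ξ b ≤ p 0 ∧ p 0 < ξ (b + 1)) ∧ (η a ≤ p 1 ∧ p 1 < η (a + 1)))).card = k / m := hOcol

  have hQxA : (∑ i ∈ range m, ∑ j ∈ range m, ∑ p ∈ A i j, ∑ q ∈ (((range m).biUnion fun i' => (range m).biUnion fun j' => A i' j') \ ((range m).biUnion fun j' => A i j')), |p 0 - q 0|) = 2 * (∑ i ∈ range m, ∑ j ∈ range m, ∑ p ∈ A i j, ((2 * (i : ℝ) + 1 - (m : ℝ)) * ((k / m : ℕ) : ℝ)) * p 0) :=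
    cross_identity m (k / m) ξ hξ (fun i j => A i j) (fun p => p 0) hAx hAdisj hArow
  have hQytA : (∑ a ∈ range m, ∑ b ∈ range m, ∑ p ∈ A b a, ∑ q ∈ (((range m).biUnion fun a' => (range m).biUnion fun b' => A b' a') \ ((range m).biUnion fun b' => A b' a)), |p 1 - q 1|) = 2 * (∑ a ∈ range m, ∑ b ∈ range m, ∑ p ∈ A b a, ((2 * (a : ℝ) + 1 - (m : ℝ)) * ((k / m : ℕ) : ℝ)) * p 1) :=
    cross_identity m (k / m) η hη (fun a b => A b a) (fun p => p 1)
      (fun a ha b hb p hp => hAy b hb a ha p hp)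
      (fun a1 h1 b1 hb1 a2 h2 b2 hb2 hne => hAdisj b1 hb1 a1 h1 b2 hb2 a2 h2 hne.symm)
      hAcol
  have hUswA : ((range m).biUnion fun a' => (range m).biUnion fun b' => A b' a') = ((range m).biUnion fun i' => (range m).biUnion fun j' => A i' j') := by
    ext p
    simp only [Finset.mem_biUnion]
    constructor
    · rintro ⟨a, ha, b, hb, hp⟩
      exact ⟨b, hb, a, ha, hp⟩
    · rintro ⟨a, ha, b, hb, hp⟩
      exact ⟨b, hb, a, ha, hp⟩
  rw [hUswA] at hQytA
  have hQyA2 : (∑ i ∈ range m, ∑ j ∈ range m, ∑ p ∈ A i j, ∑ q ∈ (((range m).biUnion fun i' => (range m).biUnion fun j' => A i' j') \ ((range m).biUnion fun i' => A i' j)), |p 1 - q 1|) = 2 * (∑ i ∈ range m, ∑ j ∈ range m, ∑ p ∈ A i j, ((2 * (j : ℝ) + 1 - (m : ℝ)) * ((k / m : ℕ) : ℝ)) * p 1) := by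
    calc (∑ i ∈ range m, ∑ j ∈ range m, ∑ p ∈ A i j, ∑ q ∈ (((range m).biUnion fun i' => (range m).biUnion fun j' => A i' j') \ ((range m).biUnion fun i' => A i' j)), |p 1 - q 1|) = (∑ j ∈ range m, ∑ i ∈ range m, ∑ p ∈ A i j, ∑ q ∈ (((range m).biUnion fun i' => (range m).biUnion fun j' => A i' j') \ ((range m).biUnion fun i' => A i' j)), |p 1 - q 1|) := Finset.sum_comm
      _ = 2 * (∑ j ∈ range m, ∑ i ∈ range m, ∑ p ∈ A i j, ((2 * (j : ℝ) + 1 - (m : ℝ)) * ((k / m : ℕ) : ℝ)) * p 1) := hQytA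
      _ = 2 * (∑ i ∈ range m, ∑ j ∈ range m, ∑ p ∈ A i j, ((2 * (j : ℝ) + 1 - (m : ℝ)) * ((k / m : ℕ) : ℝ)) * p 1) := congrArg (fun z => 2 * z) Finset.sum_comm
  have mainA : (1 / 2 : ℝ) * ((∑ i ∈ range m, ∑ j ∈ range m, ∑ p ∈ A i j, ∑ q ∈ (((range m).biUnion fun i' => (range m).biUnion fun j' => A i' j') \ ((range m).biUnion fun j' => A i j')), |p 0 - q 0|) + (∑ i ∈ range m, ∑ j ∈ range m, ∑ p ∈ A i j, ∑ q ∈ (((range m).biUnion fun i' => (range m).biUnion fun j' => A i' j') \ ((range m).biUnion fun i' => A i' j)), |p 1 - q 1|)) = (∑ i ∈ range m, ∑ j ∈ range m, ∑ p ∈ A i j, (((2 * (i : ℝ) + 1 - m) * k / m) * p 0 + ((2 * (j : ℝ) + 1 - m) * k / m) * p 1)) := by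
    calc (1 / 2 : ℝ) * ((∑ i ∈ range m, ∑ j ∈ range m, ∑ p ∈ A i j, ∑ q ∈ (((range m).biUnion fun i' => (range m).biUnion fun j' => A i' j') \ ((range m).biUnion fun j' => A i j')), |p 0 - q 0|) + (∑ i ∈ range m, ∑ j ∈ range m, ∑ p ∈ A i j, ∑ q ∈ (((range m).biUnion fun i' => (range m).biUnion fun j' => A i' j') \ ((range m).biUnion fun i' => A i' j)), |p 1 - q 1|))
        = (1 / 2 : ℝ) * (2 * (∑ i ∈ range m, ∑ j ∈ range m, ∑ p ∈ A i j, ((2 * (i : ℝ) + 1 - (m : ℝ)) * ((k / m : ℕ) : ℝ)) * p 0) + 2 * (∑ i ∈ range m, ∑ j ∈ range m, ∑ p ∈ A i j, ((2 * (j : ℝ) + 1 - (m : ℝ)) * ((k / m : ℕ) : ℝ)) * p 1)) := by rw [hQxA, hQyA2]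
      _ = (∑ i ∈ range m, ∑ j ∈ range m, ∑ p ∈ A i j, ((2 * (i : ℝ) + 1 - (m : ℝ)) * ((k / m : ℕ) : ℝ)) * p 0) + (∑ i ∈ range m, ∑ j ∈ range m, ∑ p ∈ A i j, ((2 * (j : ℝ) + 1 - (m : ℝ)) * ((k / m : ℕ) : ℝ)) * p 1) := by ring
      _ = (∑ i ∈ range m, ∑ j ∈ range m, ∑ p ∈ A i j, (((2 * (i : ℝ) + 1 - (m : ℝ)) * ((k / m : ℕ) : ℝ)) * p 0 + ((2 * (j : ℝ) + 1 - (m : ℝ)) * ((k / m : ℕ) : ℝ)) * p 1)) := by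
          rw [← Finset.sum_add_distrib]
          refine Finset.sum_congr rfl fun i _ => ?_
          rw [← Finset.sum_add_distrib]
          refine Finset.sum_congr rfl fun j _ => ?_
          rw [← Finset.sum_add_distrib]
      _ = (∑ i ∈ range m, ∑ j ∈ range m, ∑ p ∈ A i j, (((2 * (i : ℝ) + 1 - m) * k / m) * p 0 + ((2 * (j : ℝ) + 1 - m) * k / m) * p 1)) :=
          Finset.sum_congr rfl fun i _ => Finset.sum_congr rfl fun j _ =>
            Finset.sum_congr rfl fun p _ => hterm i j p


  have hQxO : (∑ i ∈ range m, ∑ j ∈ range m, ∑ p ∈ (OPT.filter fun p => (ξ i ≤ p 0 ∧ p 0 < ξ (i + 1)) ∧ (η j ≤ p 1 ∧ p 1 < η (j + 1))), ∑ q ∈ (((range m).biUnion fun i' => (range m).biUnion fun j' => (OPT.filter fun p => (ξ i' ≤ p 0 ∧ p 0 < ξ (i' + 1)) ∧ (η j' ≤ p 1 ∧ p 1 < η (j' + 1)))) \ ((range m).biUnion fun j' => (OPT.filter fun p => (ξ i ≤ p 0 ∧ p 0 < ξ (i + 1)) ∧ (η j' ≤ p 1 ∧ p 1 < η (j' + 1))))),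 |p 0 - q 0|) = 2 * (∑ i ∈ range m, ∑ j ∈ range m, ∑ p ∈ (OPT.filter fun p => (ξ i ≤ p 0 ∧ p 0 < ξ (i + 1)) ∧ (η j ≤ p 1 ∧ p 1 < η (j + 1))), ((2 * (i : ℝ) + 1 - (m : ℝ)) * ((k / m : ℕ) : ℝ)) * p 0) :=
    cross_identity m (k / m) ξ hξ (fun i j => (OPT.filter fun p => (ξ i ≤ p 0 ∧ p 0 < ξ (i + 1)) ∧ (η j ≤ p 1 ∧ p 1 < η (j + 1)))) (fun p => p 0) hOx hOdisj hOrow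
  have hQytO : (∑ a ∈ range m, ∑ b ∈ range m, ∑ p ∈ (OPT.filter fun p => (ξ b ≤ p 0 ∧ p 0 < ξ (b + 1)) ∧ (η a ≤ p 1 ∧ p 1 < η (a + 1))), ∑ q ∈ (((range m).biUnion fun a' => (range m).biUnion fun b' => (OPT.filter fun p => (ξ b' ≤ p 0 ∧ p 0 < ξ (b' + 1)) ∧ (η a' ≤ p 1 ∧ p 1 < η (a' + 1)))) \ ((range m).biUnion fun b' => (OPT.filter fun p => (ξ b' ≤ p 0 ∧ p 0 < ξ (b' + 1)) ∧ (η a ≤ p 1 ∧ p 1 < η (a + 1))))), |p 1 - q 1|) = 2 * (∑ a ∈ range m, ∑ b ∈ range m, ∑ p ∈ (OPT.filter fun p => (ξ b ≤ p 0 ∧ p 0 < ξ (b + 1)) ∧ (η a ≤ p 1 ∧ p 1 < η (a + 1))), ((2 * (a : ℝ) + 1 - (m : ℝ)) * ((k / m : ℕ) : ℝ)) * p 1) :=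
    cross_identity m (k / m) η hη (fun a b => (OPT.filter fun p => (ξ b ≤ p 0 ∧ p 0 < ξ (b + 1)) ∧ (η a ≤ p 1 ∧ p 1 < η (a + 1)))) (fun p => p 1)
      (fun a ha b hb p hp => hOy b hb a ha p hp)
      (fun a1 h1 b1 hb1 a2 h2 b2 hb2 hne => hOdisj b1 hb1 a1 h1 b2 hb2 a2 h2 hne.symm)
      hOcolS
  have hUswO : ((range m).biUnion fun a' => (range m).biUnion fun b' => (OPT.filter fun p => (ξ b' ≤ p 0 ∧ p 0 < ξ (b' + 1)) ∧ (η a' ≤ p 1 ∧ p 1 < η (a' + 1)))) = ((range m).biUnion fun i' => (range m).biUnion fun j' => (OPT.filter fun p => (ξ i' ≤ p 0 ∧ p 0 < ξ (i' + 1)) ∧ (η j' ≤ p 1 ∧ p 1 < η (j' + 1)))) := by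
    ext p
    simp only [Finset.mem_biUnion]
    constructor
    · rintro ⟨a, ha, b, hb, hp⟩
      exact ⟨b, hb, a, ha, hp⟩
    · rintro ⟨a, ha, b, hb, hp⟩
      exact ⟨b, hb, a, ha, hp⟩
  rw [hUswO] at hQytO
  have hQyO2 : (∑ i ∈ range m, ∑ j ∈ range m, ∑ p ∈ (OPT.filter fun p => (ξ i ≤ p 0 ∧ p 0 < ξ (i + 1)) ∧ (η j ≤ p 1 ∧ p 1 < η (j + 1))), ∑ q ∈ (((range m).biUnion fun i' => (range m).biUnion fun j' => (OPT.filter fun p => (ξ i' ≤ p 0 ∧ p 0 < ξ (i' + 1)) ∧ (η j' ≤ p 1 ∧ p 1 < η (j' + 1)))) \ ((range m).biUnion fun i' => (OPT.filter fun p => (ξ i' ≤ p 0 ∧ p 0 < ξ (i' + 1)) ∧ (η j ≤ p 1 ∧ p 1 < η (j + 1))))), |p 1 - q 1|) = 2 * (∑ i ∈ range m, ∑ j ∈ range m, ∑ p ∈ (OPT.filter fun p => (ξ i ≤ p 0 ∧ p 0 < ξ (i + 1)) ∧ (η j ≤ p 1 ∧ p 1 < η (j + 1))), ((2 * (j : ℝ)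 + 1 - (m : ℝ)) * ((k / m : ℕ) : ℝ)) * p 1) := by
    calc (∑ i ∈ range m, ∑ j ∈ range m, ∑ p ∈ (OPT.filter fun p => (ξ i ≤ p 0 ∧ p 0 < ξ (i + 1)) ∧ (η j ≤ p 1 ∧ p 1 < η (j + 1))), ∑ q ∈ (((range m).biUnion fun i' => (range m).biUnion fun j' => (OPT.filter fun p => (ξ i' ≤ p 0 ∧ p 0 < ξ (i' + 1)) ∧ (η j' ≤ p 1 ∧ p 1 < η (j' + 1)))) \ ((range m).biUnion fun i' => (OPT.filter fun p => (ξ i' ≤ p 0 ∧ p 0 < ξ (i' + 1)) ∧ (η j ≤ p 1 ∧ p 1 < η (j + 1))))), |p 1 - q 1|) = (∑ j ∈ range m, ∑ i ∈ range m, ∑ p ∈ (OPT.filter fun p => (ξ i ≤ p 0 ∧ p 0 < ξ (i + 1)) ∧ (η j ≤ p 1 ∧ p 1 < η (j + 1))), ∑ q ∈ (((range m).biUnion fun i' => (range m).biUnion fun j' => (OPT.filter fun p => (ξ i' ≤ p 0 ∧ p 0 < ξ (i' + 1)) ∧ (η j' ≤ p 1 ∧ p 1 < η (j' + 1)))) \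 ((range m).biUnion fun i' => (OPT.filter fun p => (ξ i' ≤ p 0 ∧ p 0 < ξ (i' + 1)) ∧ (η j ≤ p 1 ∧ p 1 < η (j + 1))))), |p 1 - q 1|) := Finset.sum_comm
      _ = 2 * (∑ j ∈ range m, ∑ i ∈ range m, ∑ p ∈ (OPT.filter fun p => (ξ i ≤ p 0 ∧ p 0 < ξ (i + 1)) ∧ (η j ≤ p 1 ∧ p 1 < η (j + 1))), ((2 * (j : ℝ) + 1 - (m : ℝ)) * ((k / m : ℕ) : ℝ)) * p 1) := hQytO
      _ = 2 * (∑ i ∈ range m, ∑ j ∈ range m, ∑ p ∈ (OPT.filter fun p => (ξ i ≤ p 0 ∧ p 0 < ξ (i + 1)) ∧ (η j ≤ p 1 ∧ p 1 < η (j + 1))), ((2 * (j : ℝ) + 1 - (m : ℝ)) * ((k / m : ℕ) : ℝ)) * p 1) := congrArg (fun z => 2 * z) Finset.sum_comm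
  have mainO : (1 / 2 : ℝ) * ((∑ i ∈ range m, ∑ j ∈ range m, ∑ p ∈ (OPT.filter fun p => (ξ i ≤ p 0 ∧ p 0 < ξ (i + 1)) ∧ (η j ≤ p 1 ∧ p 1 < η (j + 1))), ∑ q ∈ (((range m).biUnion fun i' => (range m).biUnion fun j' => (OPT.filter fun p => (ξ i' ≤ p 0 ∧ p 0 < ξ (i' + 1)) ∧ (η j' ≤ p 1 ∧ p 1 < η (j' + 1)))) \ ((range m).biUnion fun j' => (OPT.filter fun p => (ξ i ≤ p 0 ∧ p 0 < ξ (i + 1)) ∧ (η j' ≤ p 1 ∧ p 1 < η (j' + 1))))), |p 0 - q 0|) + (∑ i ∈ range m, ∑ j ∈ range m, ∑ p ∈ (OPT.filter fun p => (ξ i ≤ p 0 ∧ p 0 < ξ (i + 1)) ∧ (η j ≤ p 1 ∧ p 1 < η (j + 1))), ∑ q ∈ (((range m).biUnion fun i' => (range m).biUnion fun j' => (OPT.filter fun p => (ξ i' ≤ p 0 ∧ p 0 < ξ (i' + 1)) ∧ (η j' ≤ p 1 ∧ p 1 < η (j' + 1)))) \ ((range m).biUnion fun i' => (OPT.filter fun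 p => (ξ i' ≤ p 0 ∧ p 0 < ξ (i' + 1)) ∧ (η j ≤ p 1 ∧ p 1 < η (j + 1))))), |p 1 - q 1|)) = (∑ i ∈ range m, ∑ j ∈ range m, ∑ p ∈ (OPT.filter fun p => (ξ i ≤ p 0 ∧ p 0 < ξ (i + 1)) ∧ (η j ≤ p 1 ∧ p 1 < η (j + 1))), (((2 * (i : ℝ) + 1 - m) * k / m) * p 0 + ((2 * (j : ℝ) + 1 - m) * k / m) * p 1)) := by
    calc (1 / 2 : ℝ) * ((∑ i ∈ range m, ∑ j ∈ range m, ∑ p ∈ (OPT.filter fun p => (ξ i ≤ p 0 ∧ p 0 < ξ (i + 1)) ∧ (η j ≤ p 1 ∧ p 1 < η (j + 1))), ∑ q ∈ (((range m).biUnion fun i' => (range m).biUnion fun j' => (OPT.filter fun p => (ξ i' ≤ p 0 ∧ p 0 < ξ (i' + 1)) ∧ (η j' ≤ p 1 ∧ p 1 < η (j' + 1)))) \ ((range m).biUnion fun j' => (OPT.filter fun p => (ξ i ≤ p 0 ∧ p 0 < ξ (i + 1)) ∧ (η j' ≤ p 1 ∧ p 1 < η (j' + 1))))), |p 0 - q 0|)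 + (∑ i ∈ range m, ∑ j ∈ range m, ∑ p ∈ (OPT.filter fun p => (ξ i ≤ p 0 ∧ p 0 < ξ (i + 1)) ∧ (η j ≤ p 1 ∧ p 1 < η (j + 1))), ∑ q ∈ (((range m).biUnion fun i' => (range m).biUnion fun j' => (OPT.filter fun p => (ξ i' ≤ p 0 ∧ p 0 < ξ (i' + 1)) ∧ (η j' ≤ p 1 ∧ p 1 < η (j' + 1)))) \ ((range m).biUnion fun i' => (OPT.filter fun p => (ξ i' ≤ p 0 ∧ p 0 < ξ (i' + 1)) ∧ (η j ≤ p 1 ∧ p 1 < η (j + 1))))), |p 1 - q 1|))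
        = (1 / 2 : ℝ) * (2 * (∑ i ∈ range m, ∑ j ∈ range m, ∑ p ∈ (OPT.filter fun p => (ξ i ≤ p 0 ∧ p 0 < ξ (i + 1)) ∧ (η j ≤ p 1 ∧ p 1 < η (j + 1))), ((2 * (i : ℝ) + 1 - (m : ℝ)) * ((k / m : ℕ) : ℝ)) * p 0) + 2 * (∑ i ∈ range m, ∑ j ∈ range m, ∑ p ∈ (OPT.filter fun p => (ξ i ≤ p 0 ∧ p 0 < ξ (i + 1)) ∧ (η j ≤ p 1 ∧ p 1 < η (j + 1))), ((2 * (j : ℝ) + 1 - (m : ℝ)) * ((k / m : ℕ) : ℝ)) * p 1)) := by rw [hQxO, hQyO2]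
      _ = (∑ i ∈ range m, ∑ j ∈ range m, ∑ p ∈ (OPT.filter fun p => (ξ i ≤ p 0 ∧ p 0 < ξ (i + 1)) ∧ (η j ≤ p 1 ∧ p 1 < η (j + 1))), ((2 * (i : ℝ) + 1 - (m : ℝ)) * ((k / m : ℕ) : ℝ)) * p 0) + (∑ i ∈ range m, ∑ j ∈ range m, ∑ p ∈ (OPT.filter fun p => (ξ i ≤ p 0 ∧ p 0 < ξ (i + 1)) ∧ (η j ≤ p 1 ∧ p 1 < η (j + 1))), ((2 * (j : ℝ) + 1 - (m : ℝ)) * ((k / m : ℕ) : ℝ)) * p 1) := by ring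
      _ = (∑ i ∈ range m, ∑ j ∈ range m, ∑ p ∈ (OPT.filter fun p => (ξ i ≤ p 0 ∧ p 0 < ξ (i + 1)) ∧ (η j ≤ p 1 ∧ p 1 < η (j + 1))), (((2 * (i : ℝ) + 1 - (m : ℝ)) * ((k / m : ℕ) : ℝ)) * p 0 + ((2 * (j : ℝ) + 1 - (m : ℝ)) * ((k / m : ℕ) : ℝ)) * p 1)) := by
          rw [← Finset.sum_add_distrib]
          refine Finset.sum_congr rfl fun i _ => ?_
          rw [← Finset.sum_add_distrib]
          refine Finset.sum_congr rfl fun j _ => ?_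
          rw [← Finset.sum_add_distrib]
      _ = (∑ i ∈ range m, ∑ j ∈ range m, ∑ p ∈ (OPT.filter fun p => (ξ i ≤ p 0 ∧ p 0 < ξ (i + 1)) ∧ (η j ≤ p 1 ∧ p 1 < η (j + 1))), (((2 * (i : ℝ) + 1 - m) * k / m) * p 0 + ((2 * (j : ℝ) + 1 - m) * k / m) * p 1)) :=
          Finset.sum_congr rfl fun i _ => Finset.sum_congr rfl fun j _ =>
            Finset.sum_congr rfl fun p _ => hterm i j p

  -- greedy choice is pointwise optimal for the linear functional
  have hminsum : (∑ i ∈ range m, ∑ j ∈ range m, ∑ p ∈ A i j, (((2 * (i : ℝ) + 1 - m) * k / m) * p 0 + ((2 * (j : ℝ) + 1 - m) * k / m) * p 1)) ≤ (∑ i ∈ range m, ∑ j ∈ range m, ∑ p ∈ (OPT.filter fun p => (ξ i ≤ p 0 ∧ p 0 < ξ (i + 1)) ∧ (η j ≤ p 1 ∧ p 1 < η (j + 1))), (((2 * (i : ℝ) + 1 - m) * k / m) * p 0 + ((2 * (j : ℝ) + 1 - m) * k / m) * p 1)) := by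
    refine Finset.sum_le_sum fun i hi => Finset.sum_le_sum fun j hj => ?_
    exact hAmin i (Finset.mem_range.mp hi) j (Finset.mem_range.mp hj) _
      (Finset.filter_subset_filter _ hOP)
      (hAcard i (Finset.mem_range.mp hi) j (Finset.mem_range.mp hj)).symm
  -- OPT decomposes as the disjoint union of its cells
  have hOPTeq : OPT = ((range m).biUnion fun i' => (range m).biUnion fun j' => (OPT.filter fun p => (ξ i' ≤ p 0 ∧ p 0 < ξ (i' + 1)) ∧ (η j' ≤ p 1 ∧ p 1 < η (j' + 1)))) := by
    have h1 := filter_decomp m hmpos ξ hξ OPT 0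
      (fun p hp => ⟨(hOcover p hp).1, (hOcover p hp).2.1⟩)
    have h2 : ∀ i ∈ range m, (OPT.filter fun p => ξ i ≤ p 0 ∧ p 0 < ξ (i + 1))
        = (range m).biUnion fun j => (OPT.filter fun p => (ξ i ≤ p 0 ∧ p 0 < ξ (i + 1)) ∧ (η j ≤ p 1 ∧ p 1 < η (j + 1))) := by
      intro i hi
      have h3 := filter_decomp m hmpos η hη
        (OPT.filter fun p => ξ i ≤ p 0 ∧ p 0 < ξ (i + 1)) 1
        (fun p hp => ⟨(hOcover p (Finset.mem_filter.mp hp).1).2.2.1,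
          (hOcover p (Finset.mem_filter.mp hp).1).2.2.2⟩)
      rw [h3]
      refine Finset.biUnion_congr rfl fun j hj => ?_
      rw [Finset.filter_filter]
    exact h1.trans (Finset.biUnion_congr rfl h2)
  have hUOsub : ((range m).biUnion fun i' => (range m).biUnion fun j' => (OPT.filter fun p => (ξ i' ≤ p 0 ∧ p 0 < ξ (i' + 1)) ∧ (η j' ≤ p 1 ∧ p 1 < η (j' + 1)))) ⊆ OPT := by
    intro q hq
    rcases Finset.mem_biUnion.mp hq with ⟨i, hi, hq2⟩
    rcases Finset.mem_biUnion.mp hq2 with ⟨j, hj, hq3⟩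
    exact (Finset.mem_filter.mp hq3).1
  have hOPTsum : ∀ g : (Fin 2 → ℝ) → ℝ,
      ∑ p ∈ OPT, g p = ∑ i ∈ range m, ∑ j ∈ range m, ∑ p ∈ (OPT.filter fun p => (ξ i ≤ p 0 ∧ p 0 < ξ (i + 1)) ∧ (η j ≤ p 1 ∧ p 1 < η (j + 1))), g p := by
    intro g
    conv_lhs => rw [hOPTeq]
    rw [sum_biUnion_eq m _ (fun i1 h1 i2 h2 hne => ?_) g]
    · refine Finset.sum_congr rfl fun i hi => ?_
      exact sum_biUnion_eq m _ (fun j1 h1 j2 h2 hne =>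
        hOdisj i (Finset.mem_range.mp hi) j1 h1 i (Finset.mem_range.mp hi) j2 h2 (Or.inr hne)) g
    · rw [Finset.disjoint_biUnion_left]
      intro j1 hj1
      rw [Finset.disjoint_biUnion_right]
      intro j2 hj2
      exact hOdisj i1 h1 j1 (Finset.mem_range.mp hj1) i2 h2 j2 (Finset.mem_range.mp hj2) (Or.inl hne)
  -- the cross sums of OPT are bounded by twice its weight
  have main4 : (1 / 2 : ℝ) * ((∑ i ∈ range m, ∑ j ∈ range m, ∑ p ∈ (OPT.filter fun p => (ξ i ≤ p 0 ∧ p 0 < ξ (i + 1)) ∧ (η j ≤ p 1 ∧ p 1 < η (j + 1))), ∑ q ∈ (((range m).biUnion fun i' => (range m).biUnion fun j' => (OPT.filter fun p => (ξ i' ≤ p 0 ∧ p 0 < ξ (i' + 1)) ∧ (η j' ≤ p 1 ∧ p 1 < η (j' + 1)))) \ ((range m).biUnion fun j' => (OPT.filter fun p => (ξ i ≤ p 0 ∧ p 0 < ξ (i + 1)) ∧ (η j' ≤ p 1 ∧ p 1 < η (j' + 1))))), |p 0 - q 0|) + (∑ i ∈ range m, ∑ j ∈ range m, ∑ p ∈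 (OPT.filter fun p => (ξ i ≤ p 0 ∧ p 0 < ξ (i + 1)) ∧ (η j ≤ p 1 ∧ p 1 < η (j + 1))), ∑ q ∈ (((range m).biUnion fun i' => (range m).biUnion fun j' => (OPT.filter fun p => (ξ i' ≤ p 0 ∧ p 0 < ξ (i' + 1)) ∧ (η j' ≤ p 1 ∧ p 1 < η (j' + 1)))) \ ((range m).biUnion fun i' => (OPT.filter fun p => (ξ i' ≤ p 0 ∧ p 0 < ξ (i' + 1)) ∧ (η j ≤ p 1 ∧ p 1 < η (j + 1))))), |p 1 - q 1|)) ≤ w OPT := by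
    have hx : (∑ i ∈ range m, ∑ j ∈ range m, ∑ p ∈ (OPT.filter fun p => (ξ i ≤ p 0 ∧ p 0 < ξ (i + 1)) ∧ (η j ≤ p 1 ∧ p 1 < η (j + 1))), ∑ q ∈ (((range m).biUnion fun i' => (range m).biUnion fun j' => (OPT.filter fun p => (ξ i' ≤ p 0 ∧ p 0 < ξ (i' + 1)) ∧ (η j' ≤ p 1 ∧ p 1 < η (j' + 1)))) \ ((range m).biUnion fun j' => (OPT.filter fun p => (ξ i ≤ p 0 ∧ p 0 < ξ (i + 1)) ∧ (η j' ≤ p 1 ∧ p 1 < η (j' + 1))))), |p 0 - q 0|) ≤ ∑ p ∈ OPT, ∑ q ∈ OPT, |p 0 - q 0| := by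
      rw [hOPTsum (fun p => ∑ q ∈ OPT, |p 0 - q 0|)]
      refine Finset.sum_le_sum fun i _ => Finset.sum_le_sum fun j _ =>
        Finset.sum_le_sum fun p _ => ?_
      refine Finset.sum_le_sum_of_subset_of_nonneg ?_ (fun q _ _ => abs_nonneg _)
      exact Finset.sdiff_subset.trans hUOsub
    have hy : (∑ i ∈ range m, ∑ j ∈ range m, ∑ p ∈ (OPT.filter fun p => (ξ i ≤ p 0 ∧ p 0 < ξ (i + 1)) ∧ (η j ≤ p 1 ∧ p 1 < η (j + 1))), ∑ q ∈ (((range m).biUnion fun i' => (range m).biUnion fun j' => (OPT.filter fun p => (ξ i' ≤ p 0 ∧ p 0 < ξ (i' + 1)) ∧ (η j' ≤ p 1 ∧ p 1 < η (j' + 1)))) \ ((range m).biUnion fun i' => (OPT.filter fun p => (ξ i' ≤ p 0 ∧ p 0 < ξ (i' + 1)) ∧ (η j ≤ p 1 ∧ p 1 < η (j + 1))))), |p 1 - q 1|) ≤ ∑ p ∈ OPT, ∑ q ∈ OPT, |p 1 - q 1| := by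
      rw [hOPTsum (fun p => ∑ q ∈ OPT, |p 1 - q 1|)]
      refine Finset.sum_le_sum fun i _ => Finset.sum_le_sum fun j _ =>
        Finset.sum_le_sum fun p _ => ?_
      refine Finset.sum_le_sum_of_subset_of_nonneg ?_ (fun q _ _ => abs_nonneg _)
      exact Finset.sdiff_subset.trans hUOsub
    have hww : w OPT = ((∑ p ∈ OPT, ∑ q ∈ OPT, |p 0 - q 0|)
        + (∑ p ∈ OPT, ∑ q ∈ OPT, |p 1 - q 1|)) / 2 := by
      rw [w]
      congr 1
      rw [← Finset.sum_add_distrib]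
      refine Finset.sum_congr rfl fun p _ => ?_
      rw [← Finset.sum_add_distrib]
      refine Finset.sum_congr rfl fun q _ => ?_
      simp [dist1, Fin.sum_univ_two]
    rw [hww]
    linarith [hx, hy]
  -- final assembly
  simp only [wxp, wyp, Finset.sum_add_distrib]
  calc (1 / 2 : ℝ) * ((∑ i ∈ range m, ∑ j ∈ range m, ∑ p ∈ A i j, ∑ q ∈ (((range m).biUnion fun i' => (range m).biUnion fun j' => A i' j') \ ((range m).biUnion fun j' => A i j')), |p 0 - q 0|) + (∑ i ∈ range m, ∑ j ∈ range m, ∑ p ∈ A i j, ∑ q ∈ (((range m).biUnion fun i' => (range m).biUnion fun j' => A i' j') \ ((range m).biUnion fun i' => A i' j)), |p 1 - q 1|))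
      = (∑ i ∈ range m, ∑ j ∈ range m, ∑ p ∈ A i j, (((2 * (i : ℝ) + 1 - m) * k / m) * p 0 + ((2 * (j : ℝ) + 1 - m) * k / m) * p 1)) := mainA
    _ ≤ (∑ i ∈ range m, ∑ j ∈ range m, ∑ p ∈ (OPT.filter fun p => (ξ i ≤ p 0 ∧ p 0 < ξ (i + 1)) ∧ (η j ≤ p 1 ∧ p 1 < η (j + 1))), (((2 * (i : ℝ) + 1 - m) * k / m) * p 0 + ((2 * (j : ℝ) + 1 - m) * k / m) * p 1)) := hminsum
    _ = (1 / 2 : ℝ) * ((∑ i ∈ range m, ∑ j ∈ range m, ∑ p ∈ (OPT.filter fun p => (ξ i ≤ p 0 ∧ p 0 < ξ (i + 1)) ∧ (η j ≤ p 1 ∧ p 1 < η (j + 1))), ∑ q ∈ (((range m).biUnion fun i' => (range m).biUnion fun j' => (OPT.filter fun p => (ξ i' ≤ p 0 ∧ p 0 < ξ (i' + 1)) ∧ (η j' ≤ p 1 ∧ p 1 < η (j' + 1)))) \ ((range m).biUnion fun j' => (OPT.filter fun p => (ξ i ≤ p 0 ∧ p 0 < ξ (i + 1)) ∧ (η j'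 ≤ p 1 ∧ p 1 < η (j' + 1))))), |p 0 - q 0|) + (∑ i ∈ range m, ∑ j ∈ range m, ∑ p ∈ (OPT.filter fun p => (ξ i ≤ p 0 ∧ p 0 < ξ (i + 1)) ∧ (η j ≤ p 1 ∧ p 1 < η (j + 1))), ∑ q ∈ (((range m).biUnion fun i' => (range m).biUnion fun j' => (OPT.filter fun p => (ξ i' ≤ p 0 ∧ p 0 < ξ (i' + 1)) ∧ (η j' ≤ p 1 ∧ p 1 < η (j' + 1)))) \ ((range m).biUnion fun i' => (OPT.filter fun p => (ξ i' ≤ p 0 ∧ p 0 < ξ (i' + 1)) ∧ (η j ≤ p 1 ∧ p 1 < η (j + 1))))), |p 1 - q 1|)) := mainO.symm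
    _ ≤ w OPT := main4
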